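/- arXiv:1108.6130 — 4 statements merged into one kernel-verified Lean document; each statement's English description precedes it below -/
import Mathlib

section
/- Suppose the sequence of zeros z_n is periodic of period two: z_n = α₁ for n odd and z_n = α₂ for n even, with α₁, α₂ ∈ 𝔻, and suppose the monic OPUC Φ_n satisfy Φ_n(z_n) = 0 for all n ≥ 1. Then Φ₁(0) = -α₁, Φ₂(0) = -α₂·C where C = (α₂ - α₁)/(1 - conj(α₁)·α₂), and for all n ≥ 3, Φ_n(0) = (-1)^{n-1}·C·α₁^{(n-1)/2}·α₂^{(n-1)/2} if n is odd, and Φ_n(0) = (-1)^{n-1}·C·α₁^{n/2 - 1}·α₂^{n/2} if n is even. -/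
theorem stmt_9 (α₁ α₂ : ℂ) (hα₁ : ‖α₁‖ < 1) (hα₂ : ‖α₂‖ < 1)
    (Φ Φs : ℕ → ℂ → ℂ)
    (h0 : ∀ z, Φ 0 z = 1) (h0s : ∀ z, Φs 0 z = 1)
    (hrec : ∀ n z, Φ (n + 1) z = z * Φ n z + Φ (n + 1) 0 * Φs n z)
    (hrecs : ∀ n z, Φs (n + 1) z = Φs n z + (starRingEnd ℂ) (Φ (n + 1) 0) * z * Φ n z)
    (hVer : ∀ n, ‖Φ (n + 1) 0‖ < 1)
    (hzero : ∀ n, 1 ≤ n → Φ n (if Odd n then α₁ else α₂) = 0) :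
    Φ 1 0 = -α₁ ∧
    Φ 2 0 = -α₂ * ((α₂ - α₁) / (1 - (starRingEnd ℂ) α₁ * α₂)) ∧
    ∀ n, 3 ≤ n →
      (Odd n → Φ n 0 = (-1) ^ (n - 1) * ((α₂ - α₁) / (1 - (starRingEnd ℂ) α₁ * α₂))
          * α₁ ^ ((n - 1) / 2) * α₂ ^ ((n - 1) / 2)) ∧
      (Even n → Φ n 0 = (-1) ^ (n - 1) * ((α₂ - α₁) / (1 - (starRingEnd ℂ) α₁ * α₂))
          * α₁ ^ (n / 2 - 1) * α₂ ^ (n / 2)) := by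
  -- key lemma: Φs never vanishes in the disk and dominates Φ there
  have key : ∀ z : ℂ, ‖z‖ < 1 → ∀ n,
      ‖Φ n z‖ ≤ ‖Φs n z‖ ∧ Φs n z ≠ 0 := by
    intro z hz n
    induction n with
    | zero => simp [h0, h0s]
    | succ n ih =>
      obtain ⟨hle, hne⟩ := ih
      have ha : ‖Φ (n+1) 0‖ < 1 := hVer n
      have hspos : 0 < ‖Φs n z‖ := norm_pos_iff.mpr hne
      have hw : ‖z * Φ n z‖ < ‖Φs n z‖ := by
        have h1 : ‖z * Φ n z‖ = ‖z‖ * ‖Φ n z‖ :=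
          norm_mul _ _
        have h2 : ‖z‖ * ‖Φ n z‖ ≤ ‖z‖ * ‖Φs n z‖ :=
          mul_le_mul_of_nonneg_left hle (norm_nonneg _)
        have h3 : ‖z‖ * ‖Φs n z‖ < 1 * ‖Φs n z‖ :=
          mul_lt_mul_of_pos_right hz hspos
        rw [h1]; nlinarith
      constructor
      · rw [hrec, hrecs]
        set p := Φ n z with hp
        set s := Φs n z with hs
        set a := Φ (n+1) 0 with ha'
        have hC : (s + (starRingEnd ℂ) a * z * p) * (starRingEnd ℂ) (s + (starRingEnd ℂ) a * z * p)
            - (z * p + a * s) * (starRingEnd ℂ) (z * p + a * s)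
            = (1 - a * (starRingEnd ℂ) a) * (s * (starRingEnd ℂ) s - (z*p) * (starRingEnd ℂ) (z*p)) := by
          simp only [map_add, map_mul, Complex.conj_conj]
          ring
        simp only [Complex.mul_conj] at hC
        have hid : Complex.normSq (s + (starRingEnd ℂ) a * z * p) - Complex.normSq (z * p + a * s)
            = (1 - Complex.normSq a) * (Complex.normSq s - Complex.normSq (z * p)) := by
          exact_mod_cast hC
        have hna : Complex.normSq a ≤ 1 := by
          rw [← Complex.sq_norm]
          nlinarith [norm_nonneg a]
        have hnw : Complex.normSq (z*p) ≤ Complex.normSq s := by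
          rw [← Complex.sq_norm, ← Complex.sq_norm]
          nlinarith [norm_nonneg (z*p)]
        have hfin : Complex.normSq (z * p + a * s) ≤ Complex.normSq (s + (starRingEnd ℂ) a * z * p) := by
          nlinarith
        rw [Complex.norm_def, Complex.norm_def]
        exact Real.sqrt_le_sqrt hfin
      · rw [hrecs]
        intro hcon
        have heq : Φs n z = -((starRingEnd ℂ) (Φ (n+1) 0) * z * Φ n z) := by
          linear_combination hcon
        have habs : ‖Φs n z‖
            = ‖Φ (n+1) 0‖ * ‖z * Φ n z‖ := by
          rw [heq]
          rw [norm_neg, norm_mul, norm_mul, Complex.norm_conj, norm_mul, mul_assoc]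
        nlinarith [norm_nonneg (z * Φ n z)]
  -- basic values
  have h1 : Φ 1 0 = -α₁ := by
    have hz1 := hzero 1 (by norm_num)
    rw [if_pos (by decide : Odd 1)] at hz1
    rw [hrec 0 α₁, h0, h0s] at hz1
    linear_combination hz1
  have h1z : ∀ z : ℂ, Φ 1 z = z - α₁ := by
    intro z; rw [hrec 0 z, h0, h0s, h1]; ring
  have h1s : ∀ z : ℂ, Φs 1 z = 1 - (starRingEnd ℂ) α₁ * z := by
    intro z; rw [hrecs 0 z, h0, h0s, h1]; simp; ring
  have hD : (1 - (starRingEnd ℂ) α₁ * α₂) ≠ 0 := by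
    have := (key α₂ hα₂ 1).2
    rwa [h1s α₂] at this
  have h2 : Φ 2 0 = -α₂ * ((α₂ - α₁) / (1 - (starRingEnd ℂ) α₁ * α₂)) := by
    have hz2 := hzero 2 (by norm_num)
    rw [if_neg (by decide : ¬ Odd 2)] at hz2
    rw [hrec 1 α₂, h1z α₂, h1s α₂] at hz2
    have hz2' : α₂ * (α₂ - α₁) + Φ 2 0 * (1 - (starRingEnd ℂ) α₁ * α₂) = 0 := hz2
    have hfrac : Φ 2 0 = -α₂ * (α₂ - α₁) / (1 - (starRingEnd ℂ) α₁ * α₂) := by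
      rw [eq_div_iff hD]; linear_combination hz2'
    rw [hfrac]; ring
  -- the step relation for n ≥ 2
  have hstep' : ∀ m (z : ℂ), ‖z‖ < 1 → Φ (m+1) z = 0 → Φ (m+3) z = 0 →
      Φ (m+3) 0 = -z * Φ (m+2) 0 := by
    intro m z hz hz1 hz3
    have hne : Φs (m+1) z ≠ 0 := (key z hz (m+1)).2
    have e1 : Φ (m+2) z = Φ (m+2) 0 * Φs (m+1) z := by
      rw [hrec (m+1) z, hz1]; ring
    have e2 : Φs (m+2) z = Φs (m+1) z := by
      rw [hrecs (m+1) z, hz1]; ring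
    have e3 := hrec (m+2) z
    rw [hz3, e1, e2] at e3
    have e4 : (Φ (m+3) 0 + z * Φ (m+2) 0) * Φs (m+1) z = 0 := by linear_combination -e3
    rcases mul_eq_zero.mp e4 with h | h
    · linear_combination h
    · exact absurd h hne
  have hstep : ∀ m, Φ (m+3) 0 = -(if Odd (m+3) then α₁ else α₂) * Φ (m+2) 0 := by
    intro m
    by_cases h : Odd (m+3)
    · rw [if_pos h]
      apply hstep' m α₁ hα₁
      · have h1' : Odd (m+1) := by rw [Nat.odd_iff] at h ⊢; omega
        have := hzero (m+1) (by omega); rwa [if_pos h1'] at this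
      · have := hzero (m+3) (by omega); rwa [if_pos h] at this
    · rw [if_neg h]
      apply hstep' m α₂ hα₂
      · have h1' : ¬ Odd (m+1) := by rw [Nat.odd_iff] at h ⊢; omega
        have := hzero (m+1) (by omega); rwa [if_neg h1'] at this
      · have := hzero (m+3) (by omega); rwa [if_neg h] at this
  set C := (α₂ - α₁) / (1 - (starRingEnd ℂ) α₁ * α₂) with hCdef
  have main : ∀ n, 2 ≤ n →
      (Odd n → Φ n 0 = (-1) ^ (n - 1) * C * α₁ ^ ((n - 1) / 2) * α₂ ^ ((n - 1) / 2)) ∧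
      (Even n → Φ n 0 = (-1) ^ (n - 1) * C * α₁ ^ (n / 2 - 1) * α₂ ^ (n / 2)) := by
    intro n hn
    induction n, hn using Nat.le_induction with
    | base =>
      constructor
      · intro hodd; rw [Nat.odd_iff] at hodd; omega
      · intro _
        norm_num
        linear_combination h2
    | succ n hn ih =>
      obtain ⟨m, rfl⟩ : ∃ m, n = m + 2 := ⟨n - 2, by omega⟩
      have hs := hstep m
      constructor
      · intro hodd
        rw [if_pos hodd] at hs
        have heven : Even (m + 2) := by
          rw [Nat.odd_iff] at hodd; rw [Nat.even_iff]; omega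
        obtain ⟨k, hk⟩ : ∃ k, m = 2 * k := by
          rw [Nat.even_iff] at heven; exact ⟨m / 2, by omega⟩
        rw [hs, ih.2 heven]
        subst hk
        have e1 : (2 * k + 2) / 2 - 1 = k := by omega
        have e2 : (2 * k + 2) / 2 = k + 1 := by omega
        have e3 : (2 * k + 2) - 1 = 2 * k + 1 := by omega
        have e4 : (2 * k + 2 + 1) - 1 = 2 * k + 2 := by omega
        have e5 : ((2 * k + 2 + 1) - 1) / 2 = k + 1 := by omega
        rw [e1, e2, e3, e5, e4]
        ring
      · intro heven
        rw [if_neg (by rw [Nat.even_iff] at heven; rw [Nat.odd_iff]; omega)] at hs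
        have hodd : Odd (m + 2) := by
          rw [Nat.even_iff] at heven; rw [Nat.odd_iff]; omega
        obtain ⟨k, hk⟩ : ∃ k, m = 2 * k + 1 := by
          rw [Nat.odd_iff] at hodd; exact ⟨m / 2, by omega⟩
        rw [hs, ih.1 hodd]
        subst hk
        have e1 : (2 * k + 1 + 2 - 1) / 2 = k + 1 := by omega
        have e2 : (2 * k + 1 + 2) - 1 = 2 * k + 2 := by omega
        have e3 : (2 * k + 1 + 2 + 1) - 1 = 2 * k + 3 := by omega
        have e4 : (2 * k + 1 + 2 + 1) / 2 - 1 = k + 1 := by omega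
        have e5 : (2 * k + 1 + 2 + 1) / 2 = k + 2 := by omega
        rw [e1, e2, e3, e4, e5]
        ring
  refine ⟨h1, h2, ?_⟩
  intro n hn
  exact ⟨fun h => (main n (by omega)).1 h, fun h => (main n (by omega)).2 h⟩
end

section
/- Fix r ∈ (0,1] and define a₂ = a₃ = 2r²/(1 + r²), a_{n+1} = r·(r·a_{n-1} + a_n)/(1 + r·a_{n-1}·a_n) for n ≥ 3. Then the sequence (a_n) is monotone decreasing. -/
private lemma gmono (r x1 y1 x2 y2 : ℝ) (hr0 : 0 < r) (hr1 : r ≤ 1) (hx1 : 0 ≤ x1)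
    (hx12 : x1 ≤ x2) (hx2 : x2 ≤ 1) (hy1 : 0 ≤ y1) (hy12 : y1 ≤ y2) (hy2 : y2 ≤ 1) :
    r * (r * x1 + y1) / (1 + r * x1 * y1) ≤ r * (r * x2 + y2) / (1 + r * x2 * y2) := by
  have hx2' : 0 ≤ x2 := hx1.trans hx12
  have hy2' : 0 ≤ y2 := hy1.trans hy12
  have hD1 : 0 < 1 + r * x1 * y1 := by nlinarith [mul_nonneg (mul_nonneg hr0.le hx1) hy1]
  have hD2 : 0 < 1 + r * x2 * y2 := by nlinarith [mul_nonneg (mul_nonneg hr0.le hx2') hy2']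
  rw [div_le_div_iff₀ hD1 hD2]
  have h1 : y1 * y2 ≤ 1 := by nlinarith
  have e1 : r * x1 ≤ 1 := by nlinarith
  have e2 : r * x2 ≤ 1 := by nlinarith
  have h2 : (r * x1) * (r * x2) ≤ 1 := by
    nlinarith [mul_nonneg (sub_nonneg.2 e1) (sub_nonneg.2 e2), mul_nonneg hr0.le hx1,
      mul_nonneg hr0.le hx2']
  have h5 : 0 ≤ r * (r * ((x2 - x1) * (1 - y1 * y2))) :=
    mul_nonneg hr0.le (mul_nonneg hr0.le
      (mul_nonneg (sub_nonneg.2 hx12) (sub_nonneg.2 h1)))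
  have h6 : 0 ≤ r * ((y2 - y1) * (1 - (r * x1) * (r * x2))) :=
    mul_nonneg hr0.le (mul_nonneg (sub_nonneg.2 hy12) (sub_nonneg.2 h2))
  nlinarith [h5, h6]

theorem stmt_12 (r : ℝ) (hr0 : 0 < r) (hr1 : r ≤ 1) (a : ℕ → ℝ)
    (ha2 : a 2 = 2 * r ^ 2 / (1 + r ^ 2)) (ha3 : a 3 = 2 * r ^ 2 / (1 + r ^ 2))
    (harec : ∀ n, 3 ≤ n → a (n + 1) = r * (r * a (n - 1) + a n) / (1 + r * a (n - 1) * a n)) :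
    ∀ n, 2 ≤ n → a (n + 1) ≤ a n := by
  have hden : (0:ℝ) < 1 + r ^ 2 := by positivity
  have ht0 : 0 < 2 * r ^ 2 / (1 + r ^ 2) := by positivity
  have ht1 : 2 * r ^ 2 / (1 + r ^ 2) ≤ 1 := by
    rw [div_le_one hden]; nlinarith [sq_nonneg (1 - r)]
  have hrec' : ∀ k : ℕ, a (k + 4) = r * (r * a (k + 2) + a (k + 3)) / (1 + r * a (k + 2) * a (k + 3)) := by
    intro k
    have h := harec (k + 3) (by omega)
    simp only [show k + 3 + 1 = k + 4 from by omega, show k + 3 - 1 = k + 2 from by omega] at h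
    exact h
  -- base: a 4 ≤ a 3
  have hbase : a 4 ≤ a 3 := by
    have ha4 : a 4 = r * (r * a 2 + a 3) / (1 + r * a 2 * a 3) := by
      have := hrec' 0; norm_num at this ⊢; exact this
    rw [ha4, ha2, ha3]
    set t := 2 * r ^ 2 / (1 + r ^ 2) with htdef
    have hDt : (0:ℝ) < 1 + r * t * t := by positivity
    rw [div_le_iff₀ hDt]
    have htsq : r * t ^ 2 * (1 + r ^ 2) ^ 2 = 4 * r ^ 5 := by
      rw [htdef]; field_simp; ring
    have haux : (0:ℝ) ≤ 1 + r + 2 * r ^ 2 + r ^ 3 - r ^ 4 := by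
      nlinarith [mul_nonneg (mul_nonneg (mul_nonneg hr0.le hr0.le) hr0.le) (sub_nonneg.2 hr1)]
    have hq : (r ^ 2 + r - 1) * (1 + r ^ 2) ^ 2 ≤ 4 * r ^ 5 := by
      nlinarith [mul_nonneg (sq_nonneg (1 - r)) haux]
    have hrt : r ^ 2 + r - 1 ≤ r * t ^ 2 := by
      nlinarith [htsq, hq, mul_pos hden hden]
    nlinarith [mul_nonneg ht0.le (sub_nonneg.2 hrt)]
  -- invariant
  have key : ∀ k : ℕ, 0 < a (k + 2) ∧ a (k + 2) ≤ 1 ∧ 0 < a (k + 3) ∧ a (k + 3) ≤ 1 ∧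
      a (k + 3) ≤ a (k + 2) ∧ a (k + 4) ≤ a (k + 3) := by
    intro k
    induction k with
    | zero =>
      refine ⟨by rw [ha2]; exact ht0, by rw [ha2]; exact ht1,
        by rw [ha3]; exact ht0, by rw [ha3]; exact ht1, by rw [ha2, ha3], hbase⟩
    | succ k ih =>
      obtain ⟨h20, h21, h30, h31, h32, h43⟩ := ih
      have h4eq := hrec' k
      have hD : (0:ℝ) < 1 + r * a (k + 2) * a (k + 3) := by
        nlinarith [mul_nonneg (mul_nonneg hr0.le h20.le) h30.le]
      have h40 : 0 < a (k + 4) := by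
        rw [h4eq]
        apply div_pos _ hD
        nlinarith [mul_pos hr0 h20, mul_pos hr0 (mul_pos (mul_pos hr0 h20) h30)]
      have h41 : a (k + 4) ≤ 1 := by
        rw [h4eq, div_le_one hD]
        nlinarith [mul_nonneg hr0.le (mul_nonneg (sub_nonneg.2 hr1) h20.le),
          mul_nonneg (sub_nonneg.2 hr1) h30.le,
          mul_nonneg (sub_nonneg.2 (show r * a (k + 2) ≤ 1 by nlinarith)) (sub_nonneg.2 h31)]
      have h5eq := hrec' (k + 1)
      simp only [show k + 1 + 4 = k + 5 from by omega, show k + 1 + 2 = k + 3 from by omega,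
        show k + 1 + 3 = k + 4 from by omega] at h5eq
      have h54 : a (k + 5) ≤ a (k + 4) := by
        rw [h5eq]
        conv_rhs => rw [h4eq]
        exact gmono r (a (k + 3)) (a (k + 4)) (a (k + 2)) (a (k + 3)) hr0 hr1
          h30.le h32 h21 h40.le h43 h31
      refine ⟨?_, ?_, ?_, ?_, ?_, ?_⟩ <;>
        simp only [show k + 1 + 2 = k + 3 from by omega, show k + 1 + 3 = k + 4 from by omega,
          show k + 1 + 4 = k + 5 from by omega]
      exacts [h30, h31, h40, h41, h43, h54]
  intro n hn
  obtain ⟨k, rfl⟩ : ∃ k, n = k + 2 := ⟨n - 2, by omega⟩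
  match k with
  | 0 => exact (key 0).2.2.2.2.1
  | Nat.succ m =>
    have h := (key m).2.2.2.2.2
    simp only [show m + 1 + 2 + 1 = m + 4 from by omega, show m + 1 + 2 = m + 3 from by omega]
    exact h
end

section
/- Fix r ∈ (0,1] and define a₂ = a₃ = 2r²/(1 + r²), a_{n+1} = r·(r·a_{n-1} + a_n)/(1 + r·a_{n-1}·a_n) for n ≥ 3. If r ≤ (-1 + √5)/2 then lim_{n→∞} a_n = 0, while if r > (-1 + √5)/2 then lim_{n→∞} a_n = √(r + 1 - 1/r). -/
open Filter

set_option maxHeartbeats 1600000 in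
theorem stmt_13 (r : ℝ) (hr0 : 0 < r) (hr1 : r ≤ 1) (a : ℕ → ℝ)
    (ha2 : a 2 = 2 * r ^ 2 / (1 + r ^ 2)) (ha3 : a 3 = 2 * r ^ 2 / (1 + r ^ 2))
    (harec : ∀ n, 3 ≤ n → a (n + 1) = r * (r * a (n - 1) + a n) / (1 + r * a (n - 1) * a n)) :
    (r ≤ (-1 + Real.sqrt 5) / 2 → Tendsto a atTop (nhds 0)) ∧
    ((-1 + Real.sqrt 5) / 2 < r → Tendsto a atTop (nhds (Real.sqrt (r + 1 - 1 / r)))) := by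
  set L : ℝ := Real.sqrt (r + 1 - 1 / r) with hLdef
  have hL0 : 0 ≤ L := Real.sqrt_nonneg _
  have hinv : r * (1 / r) = 1 := mul_one_div_cancel hr0.ne'
  have h1r2 : (0:ℝ) < 1 + r ^ 2 := by positivity
  -- the invariant
  have key : ∀ n, 2 ≤ n → L ≤ a (n + 1) ∧ a (n + 1) ≤ a n ∧ a n ≤ r ∧
      r * a n * (r - a (n + 1) ^ 2) ≤ a (n + 1) * (1 - r) := by
    intro n hn
    induction n, hn using Nat.le_induction with
    | base =>
      show L ≤ a 3 ∧ a 3 ≤ a 2 ∧ a 2 ≤ r ∧ r * a 2 * (r - a 3 ^ 2) ≤ a 3 * (1 - r)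
      have hE : a 3 = a 2 := ha3.trans ha2.symm
      rw [hE]
      have hA0 : 0 ≤ a 2 := by rw [ha2]; positivity
      have hr31 : (0:ℝ) ≤ 1 + r + 2*r^2 + r^3 - r^4 := by
        nlinarith [sq_nonneg r,
          mul_nonneg (mul_nonneg (mul_nonneg hr0.le hr0.le) hr0.le) (sub_nonneg.mpr hr1)]
      have hpoly : (0:ℝ) ≤ (1 - r)^2 * (1 + r + 2*r^2 + r^3 - r^4) :=
        mul_nonneg (sq_nonneg _) hr31
      have hc1 : r + 1 - 1 / r = (r^2 + r - 1) / r := by field_simp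
      have hsq : r + 1 - 1 / r ≤ (a 2) ^ 2 := by
        rw [hc1, ha2, div_pow, div_le_div_iff₀ hr0 (by positivity)]
        nlinarith [hpoly]
      have hL2 : L ≤ a 2 := by
        calc L ≤ Real.sqrt ((a 2) ^ 2) := Real.sqrt_le_sqrt hsq
          _ = a 2 := Real.sqrt_sq hA0
      have h2 : r * (r - (a 2) ^ 2) ≤ 1 - r := by
        nlinarith [mul_le_mul_of_nonneg_left hsq hr0.le, hinv]
      refine ⟨hL2, le_refl _, ?_, ?_⟩
      · rw [ha2, div_le_iff₀ h1r2]
        nlinarith [mul_nonneg hr0.le (sq_nonneg (1 - r))]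
      · nlinarith [mul_le_mul_of_nonneg_left h2 hA0]
    | succ n hn ih =>
      show L ≤ a (n + 2) ∧ a (n + 2) ≤ a (n + 1) ∧ a (n + 1) ≤ r ∧
        r * a (n + 1) * (r - a (n + 2) ^ 2) ≤ a (n + 2) * (1 - r)
      obtain ⟨hLy, hyx, hxr, hI⟩ := ih
      set x := a n with hxdef
      set y := a (n + 1) with hydef
      have hy0 : 0 ≤ y := hL0.trans hLy
      have hx0 : 0 ≤ x := hy0.trans hyx
      have hy1 : y ≤ 1 := le_trans (hyx.trans hxr) hr1
      have hx1 : x ≤ 1 := hxr.trans hr1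
      have hD : (0:ℝ) < 1 + r * x * y := by positivity
      have hrec : a (n + 2) = r * (r * x + y) / (1 + r * x * y) := by
        have h := harec (n + 1) (by omega)
        simpa [Nat.add_sub_cancel] using h
      set z := a (n + 2) with hzdef
      have hz : z * (1 + r * x * y) = r * (r * x + y) := by
        rw [hrec, div_mul_cancel₀ _ hD.ne']
      have hz0 : 0 ≤ z := by
        nlinarith [hz, hD, mul_nonneg (mul_nonneg hr0.le hr0.le) hx0,
          mul_nonneg hr0.le hy0]
      have hzy : z ≤ y := by
        have hkey : 0 ≤ (y - z) * (1 + r * x * y) := by nlinarith [hz, hI]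
        nlinarith [hkey, hD]
      -- lower bound L ≤ z
      have hLz : L ≤ z := by
        rcases le_or_gt (r + 1 - 1 / r) 0 with hc | hc
        · have hL00 : L = 0 := Real.sqrt_eq_zero'.mpr hc
          rw [hL00]; exact hz0
        · have hL2 : L ^ 2 = r + 1 - 1 / r := Real.sq_sqrt hc.le
          have hrL2 : r * L ^ 2 = r ^ 2 + r - 1 := by
            have : r * (r + 1 - 1/r) = r^2 + r - 1 := by
              field_simp
            rw [hL2, this]
          have hL1 : L ≤ 1 := hLy.trans hy1
          have hLx : L ≤ x := hLy.trans hyx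
          have hinner : (0:ℝ) ≤ 1 - r^2 - r * L * (x - L) := by
            nlinarith [hrL2, mul_nonneg (mul_nonneg hr0.le hL0) (sub_nonneg.mpr hx1),
              mul_nonneg hr0.le (sub_nonneg.mpr hL1)]
          have hE : L * (1 + r * x * y) ≤ r * (r * x + y) := by
            nlinarith [hrL2, mul_nonneg (sub_nonneg.mpr hLy) hinner,
              mul_nonneg (sub_nonneg.mpr hr1) (sub_nonneg.mpr hLx), hL0,
              mul_nonneg hL0 (mul_nonneg (sub_nonneg.mpr hLx) (sub_nonneg.mpr hLy))]
          nlinarith [hz, hE, hD]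
      refine ⟨hLz, hzy, hyx.trans hxr, ?_⟩
      -- the hard invariant step
      have hD0 : (0:ℝ) < 1 + r * y ^ 2 := by positivity
      set z0 : ℝ := r * y * (1 + r) / (1 + r * y ^ 2) with hz0def
      have hz00 : 0 ≤ z0 := by rw [hz0def]; positivity
      have hz0eq : z0 * (1 + r * y ^ 2) = r * y * (1 + r) := by
        rw [hz0def, div_mul_cancel₀ _ hD0.ne']
      have hry2 : (0:ℝ) ≤ r - y ^ 2 := by nlinarith
      have h1r2y2 : (0:ℝ) ≤ 1 - r^2 * y^2 := by nlinarith [mul_nonneg hr0.le hy0]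
      -- z ≥ z0
      have hzz0 : z0 ≤ z := by
        have hident : (z - z0) * ((1 + r * x * y) * (1 + r * y ^ 2)) =
            r^2 * (x - y) * (1 - y ^ 2) := by
          linear_combination (1 + r * y ^ 2) * hz - (1 + r * x * y) * hz0eq
        nlinarith [hident, mul_pos hD hD0,
          mul_nonneg (mul_nonneg (mul_nonneg hr0.le hr0.le) (sub_nonneg.mpr hyx))
            (by nlinarith : (0:ℝ) ≤ 1 - y ^ 2)]
      -- C(y,y) ≥ 0
      have hyc : 0 ≤ y * (1 - r) - r * y * (r - y ^ 2) := by
        nlinarith [hI, mul_nonneg (mul_nonneg hr0.le (sub_nonneg.mpr hyx)) hry2]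
      -- J(y,z0) ≥ 0
      have hJ0 : 0 ≤ z0 * (1 - r) - r * y * (r - z0 ^ 2) := by
        have hexp : z0 * (1 - r) - r * y * (r - z0 ^ 2) =
            r * (y * (1 - r) - r * y * (r - y ^ 2)) * (1 - r^2 * y^2) / (1 + r * y ^ 2) ^ 2 := by
          rw [hz0def]; field_simp; ring
        rw [hexp]
        exact div_nonneg (mul_nonneg (mul_nonneg hr0.le hyc) h1r2y2) (by positivity)
      -- J(y,z) ≥ J(y,z0)
      nlinarith [hJ0, mul_nonneg (sub_nonneg.mpr hzz0)
        (by nlinarith [mul_nonneg (mul_nonneg hr0.le hy0) (add_nonneg hz0 hz00)] :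
          (0:ℝ) ≤ (1 - r) + r * y * (z + z0))]
  -- the shifted sequence
  set b : ℕ → ℝ := fun k => a (k + 3) with hbdef
  have hanti : ∀ k, b (k + 1) ≤ b k := fun k => (key (k + 3) (by omega)).2.1
  have hAnti : Antitone b := antitone_nat_of_succ_le hanti
  have hLb : ∀ k, L ≤ b k := fun k => (key (k + 2) (by omega)).1
  have hbdd : BddBelow (Set.range b) := ⟨L, by rintro _ ⟨k, rfl⟩; exact hLb k⟩
  have htend : Tendsto b atTop (nhds (⨅ k, b k)) := tendsto_atTop_ciInf hAnti hbdd
  set l : ℝ := ⨅ k, b k with hldef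
  have hLl : L ≤ l := le_ciInf hLb
  have hl0 : 0 ≤ l := hL0.trans hLl
  have hpos : (0:ℝ) < 1 + r * l * l := by positivity
  have hrecb : ∀ k, b (k + 2) = r * (r * b k + b (k + 1)) / (1 + r * b k * b (k + 1)) := by
    intro k
    have h := harec (k + 4) (by omega)
    have h4 : k + 4 - 1 = k + 3 := rfl
    rw [h4] at h
    exact h
  have hb1 : Tendsto (fun k => b (k + 1)) atTop (nhds l) := htend.comp (tendsto_add_atTop_nat 1)
  have hb2 : Tendsto (fun k => b (k + 2)) atTop (nhds l) := htend.comp (tendsto_add_atTop_nat 2)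
  have hnum : Tendsto (fun k => r * (r * b k + b (k + 1))) atTop (nhds (r * (r * l + l))) :=
    tendsto_const_nhds.mul ((tendsto_const_nhds.mul htend).add hb1)
  have hden : Tendsto (fun k => 1 + r * b k * b (k + 1)) atTop (nhds (1 + r * l * l)) :=
    tendsto_const_nhds.add ((tendsto_const_nhds.mul htend).mul hb1)
  have h2 : Tendsto (fun k => b (k + 2)) atTop (nhds (r * (r * l + l) / (1 + r * l * l))) :=
    Filter.Tendsto.congr (fun k => (hrecb k).symm) (hnum.div hden hpos.ne')
  have hfix : l = r * (r * l + l) / (1 + r * l * l) := tendsto_nhds_unique hb2 h2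
  have heq : l * (1 + r * l * l) = r * (r * l + l) := (eq_div_iff hpos.ne').mp hfix
  have h5 : Real.sqrt 5 ^ 2 = 5 := Real.sq_sqrt (by norm_num)
  have h5nn : 0 ≤ Real.sqrt 5 := Real.sqrt_nonneg 5
  constructor
  · intro hgold
    have hc : r ^ 2 + r - 1 ≤ 0 := by nlinarith [h5, h5nn]
    have heq' : r * l ^ 3 + l * (1 - r - r ^ 2) = 0 := by linear_combination heq
    have h1' : 0 ≤ r * l ^ 3 := mul_nonneg hr0.le (pow_nonneg hl0 3)
    have h2' : 0 ≤ l * (1 - r - r ^ 2) := mul_nonneg hl0 (by linarith)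
    have hl3 : r * l ^ 3 = 0 := by linarith
    have hlz : l = 0 := by
      rcases mul_eq_zero.mp hl3 with h | h
      · exact absurd h hr0.ne'
      · exact pow_eq_zero_iff (by norm_num) |>.mp h
    have hbz : Tendsto b atTop (nhds 0) := hlz ▸ htend
    exact (tendsto_add_atTop_iff_nat 3).mp hbz
  · intro hgold
    have hc : 0 < r ^ 2 + r - 1 := by nlinarith [h5, h5nn]
    have hcpos : 0 < r + 1 - 1 / r := by
      rw [sub_pos, div_lt_iff₀ hr0]; nlinarith
    have hLpos : 0 < L := Real.sqrt_pos.mpr hcpos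
    have hlpos : 0 < l := lt_of_lt_of_le hLpos hLl
    have hfac : l * (1 + r * l * l - (r ^ 2 + r)) = 0 := by linear_combination heq
    have h2' : 1 + r * l * l - (r ^ 2 + r) = 0 := by
      rcases mul_eq_zero.mp hfac with h | h
      · exact absurd h hlpos.ne'
      · exact h
    have hlsq : l ^ 2 = r + 1 - 1 / r := by
      have hq : l ^ 2 = (r ^ 2 + r - 1) / r := by
        rw [eq_div_iff hr0.ne']; linear_combination h2'
      have hq2 : r + 1 - 1 / r = (r ^ 2 + r - 1) / r := by field_simp
      rw [hq, hq2]
    have hlL : l = L := by rw [hLdef, ← hlsq, Real.sqrt_sq hlpos.le]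
    have hbL : Tendsto b atTop (nhds L) := hlL ▸ htend
    exact (tendsto_add_atTop_iff_nat 3).mp hbL
end

section
/- Let αₙ = Φₙ(0) be a sequence of complex numbers with Φ₁(0) = α, |Φ₂(0)| ≤ 2r²/(1+r²), |Φ₃(0)| ≤ 2r²/(1+r²), and suppose that for each n ≥ 3 there is a complex number ζ with |ζ| ≤ r ≤ 1 such that Φ_{n+1}(0) = -ζ·(ζ·Φ_{n-1}(0) + Φ_n(0))/(1 + ζ·Φ_{n-1}(0)·conj(Φ_n(0))), and all these quantities have modulus < 1. Then |Φ_{n+1}(0)| ≤ r·(r·|Φ_{n-1}(0)| + |Φ_n(0)|)/(1 + r·|Φ_{n-1}(0)|·|Φ_n(0)|) for all n ≥ 3, and consequently |Φ_{n+1}(0)| ≤ a_n for n ≥ 2, where a₂ = a₃ = 2r²/(1+r²) and a_{n+1} = r(r·a_{n-1} + a_n)/(1 + r·a_{n-1}·a_n). -/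
private lemma mob (a c : ℂ) (ha : ‖a‖ ≤ 1) (hc : ‖c‖ ≤ 1) :
    ‖a + c‖ * (1 + ‖a‖ * ‖c‖) ≤
    (‖a‖ + ‖c‖) * ‖1 + (starRingEnd ℂ) a * c‖ := by
  set A := ‖a‖ with hA
  set B := ‖c‖ with hB
  have hA0 : 0 ≤ A := norm_nonneg a
  have hB0 : 0 ≤ B := norm_nonneg c
  set d := ((starRingEnd ℂ) a * c).re with hd
  have hdm : d ≤ A * B := by
    calc d ≤ ‖(starRingEnd ℂ) a * c‖ := Complex.re_le_norm _
    _ = A * B := by rw [norm_mul, Complex.norm_conj]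
  have h1 : (‖a + c‖)^2 = A^2 + B^2 + 2*d := by
    rw [Complex.sq_norm, Complex.normSq_add, ← Complex.sq_norm, ← Complex.sq_norm]
    have : (a * (starRingEnd ℂ) c).re = d := by
      rw [hd]
      have : (starRingEnd ℂ) a * c = (starRingEnd ℂ) (a * (starRingEnd ℂ) c) := by
        simp [mul_comm]
      rw [this, Complex.conj_re]
    rw [this]
  have h2 : (‖1 + (starRingEnd ℂ) a * c‖)^2 = 1 + A^2*B^2 + 2*d := by
    rw [Complex.sq_norm, Complex.normSq_add]
    simp [Complex.normSq_mul, Complex.normSq_conj, ← Complex.sq_norm, hd]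
    rw [mul_pow]
  have hR0 : 0 ≤ (A + B) * ‖1 + (starRingEnd ℂ) a * c‖ := by positivity
  have hsq : (‖a + c‖ * (1 + A * B))^2 ≤
      ((A + B) * ‖1 + (starRingEnd ℂ) a * c‖)^2 := by
    rw [mul_pow, mul_pow, h1, h2]
    nlinarith [mul_nonneg (mul_nonneg (sub_nonneg.2 hdm)
      (sub_nonneg.2 (by nlinarith : A + B ≤ 1 + A * B)))
      (by positivity : (0:ℝ) ≤ 1 + A * B + A + B)]
  exact le_of_pow_le_pow_left₀ two_ne_zero hR0 hsq

private lemma step1R (ρ x y N D : ℝ) (hρ0 : 0 ≤ ρ) (hx0 : 0 ≤ x) (hy0 : 0 ≤ y)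
    (hN0 : 0 ≤ N) (hD0 : 0 < D)
    (hmb : N * (1 + y * (ρ * x)) ≤ (y + ρ * x) * D) :
    ρ * N / D ≤ ρ * (ρ * x + y) / (1 + ρ * x * y) := by
  have hpos : (0:ℝ) < 1 + ρ * x * y := by positivity
  rw [div_le_div_iff₀ hD0 hpos]
  nlinarith [mul_le_mul_of_nonneg_left hmb hρ0]

private lemma step2R (ρ r x y : ℝ) (hρ0 : 0 ≤ ρ) (hρr : ρ ≤ r) (hr1 : r ≤ 1)
    (hx0 : 0 ≤ x) (hx1 : x ≤ 1) (hy0 : 0 ≤ y) (hy1 : y ≤ 1) :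
    ρ * (ρ * x + y) / (1 + ρ * x * y) ≤ r * (r * x + y) / (1 + r * x * y) := by
  have hr0 : 0 ≤ r := hρ0.trans hρr
  rw [div_le_div_iff₀ (by positivity) (by positivity)]
  nlinarith [mul_nonneg (mul_nonneg (sub_nonneg.2 hρr) (add_nonneg hρ0 hr0)) hx0,
    mul_nonneg (sub_nonneg.2 hρr) hy0,
    mul_nonneg (mul_nonneg (mul_nonneg hr0 hρ0) (sub_nonneg.2 hρr))
      (mul_nonneg (mul_nonneg hx0 hx0) hy0),
    mul_nonneg (mul_nonneg (mul_nonneg (sub_nonneg.2 hρr) (add_nonneg hρ0 hr0)) hx0)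
      (mul_nonneg hx0 (mul_nonneg hy0 hy0))]

private lemma mono_aux (r x y X Y : ℝ) (hr0 : 0 ≤ r) (hr1 : r ≤ 1)
    (hx0 : 0 ≤ x) (hxX : x ≤ X) (hX1 : X ≤ 1)
    (hy0 : 0 ≤ y) (hyY : y ≤ Y) (hY1 : Y ≤ 1) :
    r * (r * x + y) / (1 + r * x * y) ≤ r * (r * X + Y) / (1 + r * X * Y) := by
  have hX0 : 0 ≤ X := hx0.trans hxX
  have hY0 : 0 ≤ Y := hy0.trans hyY
  have h1 : y * Y ≤ 1 := by nlinarith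
  have ha : r * r ≤ 1 := by nlinarith
  have hb : x * X ≤ 1 := by nlinarith
  have h2 : r * r * (x * X) ≤ 1 := by
    nlinarith [mul_le_mul ha hb (mul_nonneg hx0 hX0) zero_le_one]
  rw [div_le_div_iff₀ (by positivity) (by positivity)]
  nlinarith [mul_nonneg (mul_nonneg (mul_nonneg hr0 hr0) (sub_nonneg.2 hxX)) (sub_nonneg.2 h1),
    mul_nonneg (mul_nonneg hr0 (sub_nonneg.2 hyY)) (sub_nonneg.2 h2)]

private lemma base_aux (r : ℝ) (hr0 : 0 ≤ r) (hr : r ≤ 1) :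
    r * (r * (2 * r ^ 2 / (1 + r ^ 2)) + 2 * r ^ 2 / (1 + r ^ 2))
      / (1 + r * (2 * r ^ 2 / (1 + r ^ 2)) * (2 * r ^ 2 / (1 + r ^ 2)))
      ≤ 2 * r ^ 2 / (1 + r ^ 2) := by
  have hd : (0:ℝ) < 1 + r ^ 2 := by positivity
  have hkey : 0 ≤ (1 - r)^2 * (1 + r + 2*r^2 + r^3 - r^4) := by
    have h4 : r^4 ≤ r^3 := by nlinarith [sq_nonneg r, pow_nonneg hr0 3]
    nlinarith [sq_nonneg (1 - r)]
  have hden : (0:ℝ) < 1 + r * (2 * r ^ 2 / (1 + r ^ 2)) * (2 * r ^ 2 / (1 + r ^ 2)) := by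
    positivity
  rw [div_le_div_iff₀ hden hd]
  have hne : (1 + r^2) ≠ 0 := ne_of_gt hd
  field_simp
  nlinarith [mul_nonneg (mul_nonneg hr0 hr0) hkey, sq_nonneg r, hd.le,
    mul_nonneg (mul_nonneg (mul_nonneg hr0 hr0) (mul_nonneg hr0 hr0)) hkey]

private lemma part1_aux (r : ℝ) (hr : r ≤ 1) (ζ u v : ℂ) (hζ : ‖ζ‖ ≤ r)
    (hu : ‖u‖ < 1) (hv : ‖v‖ < 1) :
    ‖-ζ * (ζ * u + v) / (1 + ζ * u * (starRingEnd ℂ) v)‖ ≤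
      r * (r * ‖u‖ + ‖v‖) / (1 + r * ‖u‖ * ‖v‖) := by
  have hρ0 : 0 ≤ ‖ζ‖ := norm_nonneg _
  have hx0 : 0 ≤ ‖u‖ := norm_nonneg _
  have hy0 : 0 ≤ ‖v‖ := norm_nonneg _
  have hρ1 : ‖ζ‖ ≤ 1 := hζ.trans hr
  have hρx1 : ‖ζ‖ * ‖u‖ ≤ 1 := mul_le_one₀ hρ1 hx0 hu.le
  have habs_w : ‖ζ * u * (starRingEnd ℂ) v‖
      = ‖ζ‖ * ‖u‖ * ‖v‖ := by
    rw [norm_mul, norm_mul, Complex.norm_conj]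
  have hρxy : ‖ζ‖ * ‖u‖ * ‖v‖ < 1 := by
    nlinarith [mul_le_mul_of_nonneg_right hρx1 hy0]
  have hD1 : 1 - ‖ζ‖ * ‖u‖ * ‖v‖
      ≤ ‖1 + ζ * u * (starRingEnd ℂ) v‖ := by
    have h := norm_add_le (1 + ζ * u * (starRingEnd ℂ) v) (-(ζ * u * (starRingEnd ℂ) v))
    simp only [add_neg_cancel_right, norm_one, norm_neg] at h
    rw [habs_w] at h
    linarith
  have hD0 : 0 < ‖1 + ζ * u * (starRingEnd ℂ) v‖ := by linarith
  have habs : ‖-ζ * (ζ * u + v) / (1 + ζ * u * (starRingEnd ℂ) v)‖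
      = ‖ζ‖ * ‖ζ * u + v‖
        / ‖1 + ζ * u * (starRingEnd ℂ) v‖ := by
    rw [norm_div, norm_mul, norm_neg]
  have hmb : ‖ζ * u + v‖ * (1 + ‖v‖ * (‖ζ‖ * ‖u‖))
      ≤ (‖v‖ + ‖ζ‖ * ‖u‖)
        * ‖1 + ζ * u * (starRingEnd ℂ) v‖ := by
    have h := mob v (ζ * u) hv.le (by rw [norm_mul]; exact hρx1)
    have e1 : v + ζ * u = ζ * u + v := add_comm _ _
    have e3 : 1 + (starRingEnd ℂ) v * (ζ * u) = 1 + ζ * u * (starRingEnd ℂ) v := by ring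
    rw [e1, e3, norm_mul] at h
    exact h
  rw [habs]
  exact (step1R _ _ _ _ _ hρ0 hx0 hy0 (norm_nonneg _) hD0 hmb).trans
    (step2R _ _ _ _ hρ0 hζ hr hx0 hu.le hy0 hv.le)

theorem stmt_16 (r : ℝ) (hr : r ≤ 1) (α : ℂ) (b : ℕ → ℂ)
    (hb1 : b 1 = α)
    (hb2 : ‖b 2‖ ≤ 2 * r ^ 2 / (1 + r ^ 2))
    (hb3 : ‖b 3‖ ≤ 2 * r ^ 2 / (1 + r ^ 2))
    (hmod : ∀ n, ‖b n‖ < 1)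
    (hrec : ∀ n, 3 ≤ n → ∃ ζ : ℂ, ‖ζ‖ ≤ r ∧
      b (n + 1) = -ζ * (ζ * b (n - 1) + b n) / (1 + ζ * b (n - 1) * (starRingEnd ℂ) (b n))) :
    (∀ n, 3 ≤ n → ‖b (n + 1)‖ ≤
        r * (r * ‖b (n - 1)‖ + ‖b n‖)
          / (1 + r * ‖b (n - 1)‖ * ‖b n‖)) ∧
    ∀ a : ℕ → ℝ, a 2 = 2 * r ^ 2 / (1 + r ^ 2) → a 3 = 2 * r ^ 2 / (1 + r ^ 2) →
      (∀ n, 3 ≤ n → a (n + 1) = r * (r * a (n - 1) + a n) / (1 + r * a (n - 1) * a n)) →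
      ∀ n, 2 ≤ n → ‖b (n + 1)‖ ≤ a n := by
  have hr0 : 0 ≤ r := by
    obtain ⟨ζ, hζ, -⟩ := hrec 3 le_rfl
    exact (norm_nonneg ζ).trans hζ
  have part1 : ∀ n, 3 ≤ n → ‖b (n + 1)‖ ≤
      r * (r * ‖b (n - 1)‖ + ‖b n‖)
        / (1 + r * ‖b (n - 1)‖ * ‖b n‖) := by
    intro n hn
    obtain ⟨ζ, hζ, heq⟩ := hrec n hn
    rw [heq]
    exact part1_aux r hr ζ (b (n-1)) (b n) hζ (hmod _) (hmod _)
  refine ⟨part1, ?_⟩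
  intro a ha2 ha3 hA
  have hd : (0:ℝ) < 1 + r ^ 2 := by positivity
  have hc0 : 0 ≤ 2 * r ^ 2 / (1 + r ^ 2) := by positivity
  have hc1 : 2 * r ^ 2 / (1 + r ^ 2) ≤ 1 := by
    rw [div_le_one hd]; nlinarith
  have hbound : ∀ n, 2 ≤ n → 0 ≤ a n ∧ a n ≤ 1 := by
    intro n
    induction n using Nat.strong_induction_on with
    | _ n ih =>
      intro hn
      match n, hn with
      | 2, _ => rw [ha2]; exact ⟨hc0, hc1⟩
      | 3, _ => rw [ha3]; exact ⟨hc0, hc1⟩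
      | (m+4), _ =>
        obtain ⟨h10, h11⟩ := ih (m+2) (by omega) (by omega)
        obtain ⟨h20, h21⟩ := ih (m+3) (by omega) (by omega)
        have hrecA := hA (m+3) (by omega)
        rw [show m + 3 - 1 = m + 2 from rfl, show m + 3 + 1 = m + 4 from rfl] at hrecA
        rw [hrecA]
        have hra : r * a (m+2) ≤ 1 := mul_le_one₀ hr h10 h11
        constructor
        · positivity
        · rw [div_le_one (by positivity)]
          nlinarith [mul_nonneg (sub_nonneg.2 h21) (sub_nonneg.2 hra),
            mul_nonneg (mul_nonneg hr0 (sub_nonneg.2 hr)) h10,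
            mul_nonneg (sub_nonneg.2 hr) h20]
  intro n
  induction n using Nat.strong_induction_on with
  | _ n ih =>
    intro hn
    match n, hn with
    | 2, _ => rw [ha2]; exact hb3
    | 3, _ =>
      have h1 := part1 3 le_rfl
      have h2 := mono_aux r (‖b (3-1)‖) (‖b 3‖)
        (2 * r ^ 2 / (1 + r ^ 2)) (2 * r ^ 2 / (1 + r ^ 2)) hr0 hr
        (norm_nonneg _) hb2 hc1 (norm_nonneg _) hb3 hc1
      rw [ha3]
      exact h1.trans (h2.trans (base_aux r hr0 hr))
    | (m+4), _ =>
      have h1 := part1 (m+4) (by omega)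
      rw [show m + 4 - 1 = m + 3 from rfl] at h1
      have ib1 : ‖b (m+3)‖ ≤ a (m+2) := ih (m+2) (by omega) (by omega)
      have ib2 : ‖b (m+4)‖ ≤ a (m+3) := ih (m+3) (by omega) (by omega)
      obtain ⟨hA10, hA11⟩ := hbound (m+2) (by omega)
      obtain ⟨hA20, hA21⟩ := hbound (m+3) (by omega)
      have hrecA := hA (m+3) (by omega)
      rw [show m + 3 - 1 = m + 2 from rfl, show m + 3 + 1 = m + 4 from rfl] at hrecA
      rw [hrecA]
      exact h1.trans (mono_aux r _ _ _ _ hr0 hr (norm_nonneg _) ib1 hA11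
        (norm_nonneg _) ib2 hA21)
end
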